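/- Let φ : [0,∞) → [0,1] be measurable with φ = 0 on [10^{(4k)²}, 10^{(4k+1)²}) and φ = 1 on [10^{(4k+2)²}, 10^{(4k+3)²}) for all k ∈ ℕ. Then with ν_{0,k} = 10^{(4k+1)²}/k and ν_{1,k} = 10^{(4k+3)²}/k, lim_{k→∞} ∫_0^∞ φ(ν_{0,k}x)e^{-x} dx = 0 and lim_{k→∞} ∫_0^∞ φ(ν_{1,k}x)e^{-x} dx = 1; in particular lim_{ν→∞} ∫_0^∞ φ(νx)e^{-x} dx does not exist. -/

import Mathlib

open MeasureTheory Filter Set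

lemma aux_integ (f : ℝ → ℝ) (hm : Measurable f) (h01 : ∀ x, f x ∈ Set.Icc (0:ℝ) 1) :
    IntegrableOn (fun x => f x * Real.exp (-x)) (Ioi (0:ℝ)) := by
  have hexp : IntegrableOn (fun x => Real.exp (-x)) (Ioi (0:ℝ)) := by
    have := exp_neg_integrableOn_Ioi 0 (b := 1) one_pos
    simpa using this
  refine MeasureTheory.Integrable.mono hexp ?_ ?_
  · exact ((hm.mul (Real.measurable_exp.comp measurable_neg))).aestronglyMeasurable
  · refine Filter.Eventually.of_forall fun x => ?_
    have h := h01 x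
    rw [Real.norm_eq_abs, Real.norm_eq_abs, abs_of_nonneg (mul_nonneg h.1 (Real.exp_pos _).le),
      abs_of_pos (Real.exp_pos _)]
    nlinarith [Real.exp_pos (-x), h.2]

lemma aux_exp_Ioc (a b : ℝ) (hab : a ≤ b) :
    ∫ x in Ioc a b, Real.exp (-x) = Real.exp (-a) - Real.exp (-b) := by
  have hi : IntegrableOn (fun x => Real.exp (-x)) (Ioi a) := by
    have := exp_neg_integrableOn_Ioi a (b := 1) one_pos
    simpa using this
  have hu : ∫ x in Ioc a b ∪ Ioi b, Real.exp (-x)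
      = (∫ x in Ioc a b, Real.exp (-x)) + ∫ x in Ioi b, Real.exp (-x) := by
    refine setIntegral_union ?_ measurableSet_Ioi ?_ ?_
    · exact fun s hs hs' x hx => absurd ((hs' hx)) (not_lt.2 (hs hx).2)
    · exact hi.mono_set Ioc_subset_Ioi_self
    · exact hi.mono_set (Ioi_subset_Ioi hab)
  rw [Ioc_union_Ioi_eq_Ioi hab, integral_exp_neg_Ioi, integral_exp_neg_Ioi] at hu
  linarith

lemma aux_upper (f : ℝ → ℝ) (hm : Measurable f) (h01 : ∀ x, f x ∈ Set.Icc (0:ℝ) 1)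
    (a b : ℝ) (ha : 0 < a) (hab : a ≤ b) (hz : ∀ x ∈ Set.Ico a b, f x = 0) :
    ∫ x in Ioi (0:ℝ), f x * Real.exp (-x) ≤ (1 - Real.exp (-a)) + Real.exp (-b) := by
  have hI := aux_integ f hm h01
  have hexp : ∀ c : ℝ, IntegrableOn (fun x => Real.exp (-x)) (Ioi c) := by
    intro c; have := exp_neg_integrableOn_Ioi c (b := 1) one_pos; simpa using this
  have hsplit1 : Ioc (0:ℝ) a ∪ Ioi a = Ioi 0 := Ioc_union_Ioi_eq_Ioi ha.le
  have hsplit2 : Ioc a b ∪ Ioi b = Ioi a := Ioc_union_Ioi_eq_Ioi hab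
  have hd : ∀ u v : ℝ, Disjoint (Ioc u v) (Ioi v) :=
    fun u v s hs hs' x hx => absurd ((hs' hx)) (not_lt.2 (hs hx).2)
  have e1 : ∫ x in Ioi (0:ℝ), f x * Real.exp (-x)
      = (∫ x in Ioc (0:ℝ) a, f x * Real.exp (-x)) + ∫ x in Ioi a, f x * Real.exp (-x) := by
    rw [← hsplit1]
    exact setIntegral_union (hd 0 a) measurableSet_Ioi
      (hI.mono_set (by rw [← hsplit1]; exact subset_union_left))
      (hI.mono_set (by rw [← hsplit1]; exact subset_union_right))
  have e2 : ∫ x in Ioi a, f x * Real.exp (-x)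
      = (∫ x in Ioc a b, f x * Real.exp (-x)) + ∫ x in Ioi b, f x * Real.exp (-x) := by
    have hIa : IntegrableOn (fun x => f x * Real.exp (-x)) (Ioi a) :=
      hI.mono_set (Ioi_subset_Ioi ha.le)
    rw [← hsplit2]
    exact setIntegral_union (hd a b) measurableSet_Ioi
      (hIa.mono_set (by rw [← hsplit2]; exact subset_union_left))
      (hIa.mono_set (by rw [← hsplit2]; exact subset_union_right))
  have m1 : ∫ x in Ioc (0:ℝ) a, f x * Real.exp (-x) ≤ 1 - Real.exp (-a) := by
    have : ∫ x in Ioc (0:ℝ) a, f x * Real.exp (-x) ≤ ∫ x in Ioc (0:ℝ) a, Real.exp (-x) := by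
      refine setIntegral_mono_on (hI.mono_set Ioc_subset_Ioi_self)
        ((hexp 0).mono_set Ioc_subset_Ioi_self) measurableSet_Ioc fun x hx => ?_
      nlinarith [Real.exp_pos (-x), (h01 x).1, (h01 x).2]
    rw [aux_exp_Ioc 0 a ha.le] at this
    simpa using this
  have m2 : ∫ x in Ioc a b, f x * Real.exp (-x) = 0 := by
    rw [integral_Ioc_eq_integral_Ioo]
    rw [setIntegral_congr_fun measurableSet_Ioo
      (fun x hx => by show f x * Real.exp (-x) = _; rw [hz x ⟨hx.1.le, hx.2⟩, zero_mul]; rfl : EqOn (fun x => f x * Real.exp (-x)) 0 _)]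
    simp
  have m3 : ∫ x in Ioi b, f x * Real.exp (-x) ≤ Real.exp (-b) := by
    have : ∫ x in Ioi b, f x * Real.exp (-x) ≤ ∫ x in Ioi b, Real.exp (-x) := by
      refine setIntegral_mono_on (hI.mono_set (Ioi_subset_Ioi (ha.le.trans hab)))
        (hexp b) measurableSet_Ioi fun x hx => ?_
      nlinarith [Real.exp_pos (-x), (h01 x).1, (h01 x).2]
    rwa [integral_exp_neg_Ioi] at this
  linarith [e1, e2, m1, m2, m3]

lemma aux_lower (f : ℝ → ℝ) (hm : Measurable f) (h01 : ∀ x, f x ∈ Set.Icc (0:ℝ) 1)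
    (a b : ℝ) (ha : 0 < a) (hab : a ≤ b) (ho : ∀ x ∈ Set.Ico a b, f x = 1) :
    Real.exp (-a) - Real.exp (-b) ≤ ∫ x in Ioi (0:ℝ), f x * Real.exp (-x) := by
  have hI := aux_integ f hm h01
  have e0 : ∫ x in Ioo a b, f x * Real.exp (-x) = Real.exp (-a) - Real.exp (-b) := by
    rw [setIntegral_congr_fun measurableSet_Ioo
      (fun x hx => by show f x * Real.exp (-x) = Real.exp (-x); rw [ho x ⟨hx.1.le, hx.2⟩, one_mul] :
        EqOn (fun x => f x * Real.exp (-x)) (fun x => Real.exp (-x)) _)]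
    rw [← integral_Ioc_eq_integral_Ioo, aux_exp_Ioc a b hab]
  rw [← e0]
  refine setIntegral_mono_set hI ?_ ?_
  · exact Filter.Eventually.of_forall fun x => mul_nonneg (h01 x).1 (Real.exp_pos _).le
  · exact Filter.Eventually.of_forall fun x hx => ha.trans hx.1

section
variable (φ : ℝ → ℝ)

-- generic bound lemma for pattern: ν = 10^E/k, zero/one interval [10^A, 10^E) with E = A + d
lemma aux_scale (k : ℕ) (hk : 1 ≤ k) (A d : ℕ) (x : ℝ)
    (hx : x ∈ Set.Ico ((k:ℝ)/10^d) (k:ℝ)) :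
    ((10:ℝ)^(A + d) / k) * x ∈ Set.Ico ((10:ℝ)^A) ((10:ℝ)^(A+d)) := by
  have hk0 : (0:ℝ) < k := by exact_mod_cast hk
  have hν : (0:ℝ) < (10:ℝ)^(A+d) / k := div_pos (pow_pos (by norm_num) _) hk0
  constructor
  · have h1 : ((10:ℝ)^(A + d) / k) * ((k:ℝ)/10^d) = (10:ℝ)^A := by
      rw [pow_add]
      field_simp
    calc (10:ℝ)^A = ((10:ℝ)^(A + d) / k) * ((k:ℝ)/10^d) := h1.symm
      _ ≤ _ := mul_le_mul_of_nonneg_left hx.1 hν.le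
  · have h2 : ((10:ℝ)^(A + d) / k) * (k:ℝ) = (10:ℝ)^(A+d) := by
      field_simp
    calc ((10:ℝ)^(A + d) / k) * x < ((10:ℝ)^(A + d) / k) * k :=
        mul_lt_mul_of_pos_left hx.2 hν
      _ = _ := h2
end

lemma aux_tend_small (c : ℕ) : Tendsto (fun k : ℕ => (k:ℝ)/10^(8*k+c)) atTop (nhds 0) := by
  have h := tendsto_pow_const_mul_const_pow_of_abs_lt_one 1 (r := (1/10:ℝ)) (by rw [abs_of_pos] <;> norm_num)
  refine tendsto_of_tendsto_of_tendsto_of_le_of_le tendsto_const_nhds h ?_ ?_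
  · intro k
    exact div_nonneg (Nat.cast_nonneg _) (pow_pos (by norm_num : (0:ℝ) < 10) _).le
  · intro k
    have h1 : (10:ℝ)^k ≤ 10^(8*k+c) := pow_le_pow_right₀ (by norm_num) (by omega)
    have h2 : (k:ℝ)/10^(8*k+c) ≤ (k:ℝ)/10^k :=
      div_le_div_of_nonneg_left (Nat.cast_nonneg _) (pow_pos (by norm_num) _) h1
    calc (k:ℝ)/10^(8*k+c) ≤ (k:ℝ)/10^k := h2
      _ = (k:ℝ)^1 * (1/10)^k := by rw [pow_one, div_pow, one_pow, div_eq_mul_one_div]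

theorem stmt_19 (φ : ℝ → ℝ) (hφm : Measurable φ)
    (hφ01 : ∀ x, φ x ∈ Set.Icc (0 : ℝ) 1)
    (h0 : ∀ k : ℕ, ∀ x ∈ Set.Ico ((10 : ℝ) ^ ((4 * k) ^ 2)) ((10 : ℝ) ^ ((4 * k + 1) ^ 2)),
      φ x = 0)
    (h1 : ∀ k : ℕ, ∀ x ∈ Set.Ico ((10 : ℝ) ^ ((4 * k + 2) ^ 2)) ((10 : ℝ) ^ ((4 * k + 3) ^ 2)),
      φ x = 1) :
    Tendsto (fun k : ℕ =>
        ∫ x in Set.Ioi (0 : ℝ), φ (((10 : ℝ) ^ ((4 * k + 1) ^ 2) / k) * x) * Real.exp (-x))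
      atTop (nhds 0) ∧
    Tendsto (fun k : ℕ =>
        ∫ x in Set.Ioi (0 : ℝ), φ (((10 : ℝ) ^ ((4 * k + 3) ^ 2) / k) * x) * Real.exp (-x))
      atTop (nhds 1) ∧
    ¬ ∃ l : ℝ, Tendsto (fun ν : ℝ =>
        ∫ x in Set.Ioi (0 : ℝ), φ (ν * x) * Real.exp (-x)) atTop (nhds l) := by
  have hmc : ∀ ν : ℝ, Measurable fun x => φ (ν * x) :=
    fun ν => hφm.comp (measurable_const_mul ν)
  have h01c : ∀ ν : ℝ, ∀ x, φ (ν * x) ∈ Set.Icc (0:ℝ) 1 := fun ν x => hφ01 _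
  -- limit of lower/upper endpoint sequences
  have hA : ∀ c : ℕ, Tendsto (fun k : ℕ => Real.exp (-((k:ℝ)/10^(8*k+c)))) atTop (nhds 1) := by
    intro c
    have h := (aux_tend_small c).neg
    rw [neg_zero] at h
    have := (Real.continuous_exp.tendsto 0).comp h
    simpa [Function.comp_def] using this
  have hB : Tendsto (fun k : ℕ => Real.exp (-(k:ℝ))) atTop (nhds 0) :=
    Real.tendsto_exp_neg_atTop_nhds_zero.comp tendsto_natCast_atTop_atTop
  -- Part 1
  have part1 : Tendsto (fun k : ℕ =>
      ∫ x in Set.Ioi (0 : ℝ), φ (((10 : ℝ) ^ ((4 * k + 1) ^ 2) / k) * x) * Real.exp (-x))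
      atTop (nhds 0) := by
    have hub : ∀ k : ℕ, 1 ≤ k →
        (∫ x in Set.Ioi (0 : ℝ), φ (((10 : ℝ) ^ ((4 * k + 1) ^ 2) / k) * x) * Real.exp (-x))
          ≤ (1 - Real.exp (-((k:ℝ)/10^(8*k+1)))) + Real.exp (-(k:ℝ)) := by
      intro k hk
      have hk0 : (0:ℝ) < k := by exact_mod_cast hk
      have hE : (4 * k + 1)^2 = (4*k)^2 + (8*k+1) := by ring
      refine aux_upper _ (hmc _) (h01c _) ((k:ℝ)/10^(8*k+1)) k
        (div_pos hk0 (pow_pos (by norm_num) _))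
        (div_le_self hk0.le (one_le_pow₀ (by norm_num)))
        (fun x hx => ?_)
      have := aux_scale k hk ((4*k)^2) (8*k+1) x hx
      rw [← hE] at this
      exact h0 k _ this
    have hlb : ∀ k : ℕ, 0 ≤
        ∫ x in Set.Ioi (0 : ℝ), φ (((10 : ℝ) ^ ((4 * k + 1) ^ 2) / k) * x) * Real.exp (-x) := by
      intro k
      exact setIntegral_nonneg measurableSet_Ioi
        (fun x _ => mul_nonneg (hφ01 _).1 (Real.exp_pos _).le)
    have hu : Tendsto (fun k : ℕ =>
        (1 - Real.exp (-((k:ℝ)/10^(8*k+1)))) + Real.exp (-(k:ℝ))) atTop (nhds 0) := by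
      have := ((tendsto_const_nhds (x := (1:ℝ))).sub (hA 1)).add hB
      simpa using this
    refine tendsto_of_tendsto_of_tendsto_of_le_of_le' tendsto_const_nhds hu
      (Filter.Eventually.of_forall hlb) ?_
    filter_upwards [eventually_ge_atTop 1] with k hk using hub k hk
  -- Part 2
  have part2 : Tendsto (fun k : ℕ =>
      ∫ x in Set.Ioi (0 : ℝ), φ (((10 : ℝ) ^ ((4 * k + 3) ^ 2) / k) * x) * Real.exp (-x))
      atTop (nhds 1) := by
    have hlb : ∀ k : ℕ, 1 ≤ k →
        Real.exp (-((k:ℝ)/10^(8*k+5))) - Real.exp (-(k:ℝ)) ≤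
        ∫ x in Set.Ioi (0 : ℝ), φ (((10 : ℝ) ^ ((4 * k + 3) ^ 2) / k) * x) * Real.exp (-x) := by
      intro k hk
      have hk0 : (0:ℝ) < k := by exact_mod_cast hk
      have hE : (4 * k + 3)^2 = (4*k+2)^2 + (8*k+5) := by ring
      refine aux_lower _ (hmc _) (h01c _) ((k:ℝ)/10^(8*k+5)) k
        (div_pos hk0 (pow_pos (by norm_num) _))
        (div_le_self hk0.le (one_le_pow₀ (by norm_num)))
        (fun x hx => ?_)
      have := aux_scale k hk ((4*k+2)^2) (8*k+5) x hx
      rw [← hE] at this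
      exact h1 k _ this
    have hub : ∀ k : ℕ,
        (∫ x in Set.Ioi (0 : ℝ), φ (((10 : ℝ) ^ ((4 * k + 3) ^ 2) / k) * x) * Real.exp (-x))
          ≤ 1 := by
      intro k
      have hexp : IntegrableOn (fun x => Real.exp (-x)) (Ioi (0:ℝ)) := by
        have := exp_neg_integrableOn_Ioi 0 (b := 1) one_pos
        simpa using this
      have : (∫ x in Set.Ioi (0 : ℝ), φ (((10 : ℝ) ^ ((4 * k + 3) ^ 2) / k) * x) * Real.exp (-x))
          ≤ ∫ x in Set.Ioi (0:ℝ), Real.exp (-x) := by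
        refine setIntegral_mono_on (aux_integ _ (hmc _) (h01c _)) hexp measurableSet_Ioi
          (fun x _ => ?_)
        nlinarith [Real.exp_pos (-x), (hφ01 ((10 : ℝ) ^ ((4 * k + 3) ^ 2) / k * x)).1,
          (hφ01 ((10 : ℝ) ^ ((4 * k + 3) ^ 2) / k * x)).2]
      rw [integral_exp_neg_Ioi] at this
      simpa using this
    have hl : Tendsto (fun k : ℕ =>
        Real.exp (-((k:ℝ)/10^(8*k+5))) - Real.exp (-(k:ℝ))) atTop (nhds 1) := by
      have := (hA 5).sub hB
      simpa using this
    refine tendsto_of_tendsto_of_tendsto_of_le_of_le' hl tendsto_const_nhds ?_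
      (Filter.Eventually.of_forall hub)
    filter_upwards [eventually_ge_atTop 1] with k hk using hlb k hk
  refine ⟨part1, part2, ?_⟩
  -- Part 3
  rintro ⟨l, hl⟩
  have hnat : ∀ k : ℕ, (k:ℝ) ≤ 10^k := by
    intro k
    calc (k:ℝ) ≤ 2^k := by exact_mod_cast (Nat.lt_two_pow_self (n := k)).le
      _ ≤ 10^k := pow_le_pow_left₀ (by norm_num) (by norm_num) k
  have hs : ∀ c : ℕ, Tendsto (fun k : ℕ => (10:ℝ)^((4*k+c)^2)/k) atTop atTop := by
    intro c
    refine tendsto_atTop_mono' atTop ?_ tendsto_natCast_atTop_atTop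
    filter_upwards [eventually_ge_atTop 1] with k hk
    have hk0 : (0:ℝ) < k := by exact_mod_cast hk
    rw [le_div_iff₀ hk0]
    calc (k:ℝ) * k ≤ 10^k * 10^k := mul_le_mul (hnat k) (hnat k) hk0.le (by positivity)
      _ = 10^(k+k) := (pow_add _ _ _).symm
      _ ≤ 10^((4*k+c)^2) := pow_le_pow_right₀ (by norm_num) (by nlinarith [hk, Nat.zero_le c, sq_nonneg (4*k+c)])
  have hcomp0 := hl.comp (hs 1)
  have hcomp1 := hl.comp (hs 3)
  have e0 : l = 0 := tendsto_nhds_unique hcomp0 part1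
  have e1 : l = 1 := tendsto_nhds_unique hcomp1 part2
  rw [e0] at e1
  norm_num at e1
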